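/- arXiv:math/0509692 — 3 statements merged into one kernel-verified Lean document; each statement's English description precedes it below -/
import Mathlib

section
/- Let K be a field with char(K) ≠ 2, h, t, h̃, t̃ ∈ K with h² + 4t ≠ 0, (h̃² + 4t̃)/(h² + 4t) = a², a ≠ 0, and b = (h̃ - ah)/2. Then (ax + b)² - h̃(ax + b) - t̃ ≡ 0 in K[x]/(x² - hx - t); equivalently, the substituted element ax + b satisfies the defining relation of A_{h̃,t̃}. -/
open Polynomial AdjoinRoot

theorem stmt_5 (K : Type*) [Field K] (hchar : ringChar K ≠ 2)
    (h t h' t' a b : K) (ha : a ≠ 0) (hd : h ^ 2 + 4 * t ≠ 0)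
    (hsq : (h' ^ 2 + 4 * t') / (h ^ 2 + 4 * t) = a ^ 2)
    (hb : b = (h' - a * h) / 2) :
    ∀ y : AdjoinRoot (X ^ 2 - C h * X - C t),
      y = algebraMap K (AdjoinRoot (X ^ 2 - C h * X - C t)) a * root (X ^ 2 - C h * X - C t)
            + algebraMap K (AdjoinRoot (X ^ 2 - C h * X - C t)) b →
      y ^ 2 - algebraMap K _ h' * y - algebraMap K _ t' = 0 := by
  have h2 : (2 : K) ≠ 0 := Ring.two_ne_zero hchar
  have key : h' ^ 2 + 4 * t' = a ^ 2 * (h ^ 2 + 4 * t) := by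
    field_simp at hsq; linear_combination hsq
  have c1 : a ^ 2 * t + b ^ 2 - h' * b - t' = 0 := by
    subst hb; field_simp; linear_combination -1 * key
  have c2 : a * (a * h + 2 * b - h') = 0 := by
    subst hb; field_simp; ring
  intro y hy
  subst hy
  set A := AdjoinRoot (X ^ 2 - C h * X - C t)
  set u := algebraMap K A
  set r := root (X ^ 2 - C h * X - C t)
  have hr : r ^ 2 - u h * r - u t = 0 := by
    have := AdjoinRoot.mk_self (f := X ^ 2 - C h * X - C t)
    simp [map_sub, map_mul, map_pow] at this; exact this
  have c1' : u a ^ 2 * u t + u b ^ 2 - u h' * u b - u t' = 0 := by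
    have := congrArg u c1
    simpa [map_add, map_sub, map_mul, map_pow] using this
  have c2' : u a * (u a * u h + 2 * u b - u h') = 0 := by
    have := congrArg u c2
    simpa [map_add, map_sub, map_mul, map_pow, map_ofNat] using this
  linear_combination (u a) ^ 2 * hr + r * c2' + c1'
end

section
/- With the Frobenius structure on A_{h,t} as above, Δ is coassociative: (Δ ⊗ id) ∘ Δ = (id ⊗ Δ) ∘ Δ. -/
open Polynomial AdjoinRoot
open scoped TensorProduct

/-- `A_{h,t} = K[x]/(x² - hx - t)`. -/
noncomputable abbrev Aht (K : Type*) [Field K] (h t : K) :=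
  AdjoinRoot (X ^ 2 - C h * X - C t)

/-- The canonical generator `x` of `A_{h,t}`. -/
noncomputable abbrev AhtX (K : Type*) [Field K] (h t : K) : Aht K h t :=
  root (X ^ 2 - C h * X - C t)

set_option maxHeartbeats 2000000 in
set_option synthInstance.maxHeartbeats 1000000 in
/-- Coassociativity of `Δ`: `(Δ ⊗ id) ∘ Δ = (id ⊗ Δ) ∘ Δ` (after reassociating). -/
theorem stmt_8 (K : Type*) [Field K] (h t : K)
    (Δ : Aht K h t →ₗ[K] Aht K h t ⊗[K] Aht K h t)
    (hΔ1 : Δ 1 = 1 ⊗ₜ[K] AhtX K h t + AhtX K h t ⊗ₜ[K] 1 - h • (1 ⊗ₜ[K] 1))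
    (hΔx : Δ (AhtX K h t) = AhtX K h t ⊗ₜ[K] AhtX K h t + t • (1 ⊗ₜ[K] 1)) :
    ∀ a, TensorProduct.assoc K (Aht K h t) (Aht K h t) (Aht K h t)
          (TensorProduct.map Δ LinearMap.id (Δ a))
        = TensorProduct.map LinearMap.id Δ (Δ a) := by
  classical
  have hmon : (X ^ 2 - C h * X - C t).Monic := by monicity!
  set A := Aht K h t with hA
  let F : A →ₗ[K] A ⊗[K] (A ⊗[K] A) :=
    (TensorProduct.assoc K A A A).toLinearMap ∘ₗ (TensorProduct.map Δ LinearMap.id ∘ₗ Δ)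
  let G : A →ₗ[K] A ⊗[K] (A ⊗[K] A) := TensorProduct.map LinearMap.id Δ ∘ₗ Δ
  suffices hFG : F = G by
    intro a
    exact LinearMap.congr_fun hFG a
  let pb := AdjoinRoot.powerBasis (K := K) hmon.ne_zero
  have hdim : pb.dim = 2 := by
    show (X ^ 2 - C h * X - C t).natDegree = 2
    compute_degree!
  apply pb.basis.ext
  intro i
  have hb := pb.basis_eq_pow i
  have hgen : pb.gen = AhtX K h t := AdjoinRoot.powerBasis_gen hmon.ne_zero
  obtain ⟨i, hi⟩ := i
  rw [hdim] at hi
  interval_cases i <;>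
    rw [hb, hgen] <;>
    simp only [pow_zero, pow_one, F, G, LinearMap.comp_apply, LinearEquiv.coe_coe, hΔ1, hΔx,
      map_add, map_sub, map_smul, TensorProduct.map_tmul, LinearMap.id_apply,
      TensorProduct.assoc_tmul, TensorProduct.add_tmul, TensorProduct.sub_tmul,
      TensorProduct.smul_tmul, TensorProduct.tmul_add, TensorProduct.tmul_sub,
      TensorProduct.tmul_smul] <;>
    module
end

section
/- Let h, t ∈ ℤ with h² + 4t = γ² for nonzero γ ∈ ℤ. Then the ℤ-algebra ℤ[x]/(x² - hx - t) is isomorphic as a ring to the subring {(a, b) ∈ ℤ × ℤ : a ≡ b mod γ} of ℤ × ℤ, via x ↦ ((h+γ)/2, (h-γ)/2) when h and γ have the same parity. -/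
open Polynomial AdjoinRoot

lemma eval₂_pair (x y : ℤ) (p : ℤ[X]) :
    eval₂ (Int.castRingHom (ℤ × ℤ)) (x, y) p = (p.eval x, p.eval y) := by
  induction p using Polynomial.induction_on' with
  | add p q hp hq => simp [hp, hq, Prod.ext_iff]
  | monomial n c => simp [eval₂_monomial, eval_monomial, Prod.ext_iff]

/-- `ℤ[x]/(x² - hx - t)` embeds in `ℤ × ℤ` via the two roots, with image the
pairs congruent mod `γ`. -/
theorem stmt_18 (h t γ : ℤ) (hγ : γ ≠ 0) (hd : h ^ 2 + 4 * t = γ ^ 2)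
    (hpar : h % 2 = γ % 2) :
    ∃ e : AdjoinRoot (X ^ 2 - C h * X - C t : ℤ[X]) →+* ℤ × ℤ,
      Function.Injective e ∧
      e (root (X ^ 2 - C h * X - C t : ℤ[X])) = ((h + γ) / 2, (h - γ) / 2) ∧
      Set.range e = {p : ℤ × ℤ | p.1 ≡ p.2 [ZMOD γ]} := by
  have ha2 : 2 * ((h + γ) / 2) = h + γ := by omega
  have hb2 : 2 * ((h - γ) / 2) = h - γ := by omega
  set a := (h + γ) / 2 with ha_def
  set b := (h - γ) / 2 with hb_def
  have hsum : a + b = h := by omega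
  have hdiff : a - b = γ := by omega
  have h4 : 4 * (a * b) = h ^ 2 - γ ^ 2 := by
    linear_combination (h - γ) * ha2 + (2 * a) * hb2
  have hab : a * b = -t := by linarith
  set q : ℤ[X] := X ^ 2 - C h * X - C t with hq_def
  have hq2 : q = C 1 * X ^ 2 + C (-h) * X + C (-t) := by simp [hq_def]; ring
  have hqmonic : q.Monic := by
    have hrw : q = X ^ (1 + 1) - (C h * X + C t) := by rw [hq_def]; ring
    rw [hrw]
    exact monic_X_pow_sub (lt_of_le_of_lt degree_linear_le (by decide))
  have hqdeg : q.degree = 2 := by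
    rw [hq2]; exact degree_quadratic one_ne_zero
  have hroot : eval₂ (Int.castRingHom (ℤ × ℤ)) (a, b) q = 0 := by
    rw [eval₂_pair]
    have h1 : q.eval a = 0 := by
      simp [hq_def]; linear_combination a * hsum - hab
    have h2 : q.eval b = 0 := by
      simp [hq_def]; linear_combination b * hsum - hab
    simp [h1, h2, Prod.ext_iff]
  set e := AdjoinRoot.lift (Int.castRingHom (ℤ × ℤ)) (a, b) hroot with he_def
  have key : ∀ p : ℤ[X], e (mk q p) = (p.eval a, p.eval b) := fun p => by
    rw [he_def, lift_mk, eval₂_pair]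
  refine ⟨e, ?_, ?_, ?_⟩
  · rw [injective_iff_map_eq_zero]
    intro z hz
    obtain ⟨p, rfl⟩ := mk_surjective z
    have hmkeq : mk q p = mk q (p %ₘ q) := by
      rw [AdjoinRoot.mk_eq_mk]
      exact ⟨p /ₘ q, by linear_combination - (modByMonic_add_div p q)⟩
    have hdeg : (p %ₘ q).degree ≤ 1 := by
      have := degree_modByMonic_lt p hqmonic
      rw [hqdeg] at this
      exact Order.le_of_lt_succ (by exact_mod_cast this)
    have hr : p %ₘ q = C ((p %ₘ q).coeff 1) * X + C ((p %ₘ q).coeff 0) :=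
      eq_X_add_C_of_degree_le_one hdeg
    set c1 := (p %ₘ q).coeff 1
    set c0 := (p %ₘ q).coeff 0
    rw [hmkeq, key] at hz
    rw [Prod.ext_iff] at hz
    obtain ⟨hz1, hz2⟩ := hz
    rw [hr] at hz1 hz2
    simp at hz1 hz2
    have hc1 : c1 * γ = 0 := by linear_combination hz1 - hz2 - c1 * hdiff
    have hc1' : c1 = 0 := by
      rcases mul_eq_zero.mp hc1 with h' | h'
      · exact h'
      · exact absurd h' hγ
    have hc0 : c0 = 0 := by rw [hc1'] at hz1; linarith
    rw [hmkeq, hr, hc1', hc0]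
    simp
  · have : root q = mk q X := by rw [mk_X]
    rw [this, key]
    simp
  · ext ⟨u, v⟩
    simp only [Set.mem_range, Set.mem_setOf_eq]
    constructor
    · rintro ⟨z, hz⟩
      obtain ⟨p, rfl⟩ := mk_surjective z
      rw [key] at hz
      have hdvd : γ ∣ p.eval a - p.eval b := hdiff ▸ sub_dvd_eval_sub a b p
      rw [Prod.ext_iff] at hz
      obtain ⟨h1, h2⟩ := hz
      simp only at h1 h2
      rw [Int.modEq_iff_dvd, ← h1, ← h2]
      exact dvd_sub_comm.mp hdvd
    · intro hmod
      obtain ⟨d, hdγ⟩ := Int.ModEq.dvd hmod.symm  -- γ ∣ u - v ?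
      refine ⟨mk q (C d * X + C (u - d * a)), ?_⟩
      rw [key, Prod.ext_iff]
      simp only [eval_add, eval_mul, eval_C, eval_X]
      constructor
      · ring
      · linear_combination hdγ - d * hdiff
end
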